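/- Let φ be the CNF formula of the weighted MaxSAT reduction (hard clauses) in which each answer variable p_l occurs only negatively, and suppose setting all x-variables to true and all p-variables to false satisfies all hard clauses of the initial formula. Then at the beginning of every iteration i of the elimination algorithm (which in each round adds hard unit clauses (¬p_l) for some l's and removes clauses containing ¬p_l and the soft clauses (p_l)), every optimal solution of the current weighted MaxSAT instance ψ_i satisfies all clauses of the original hard formula φ. -/
import Mathlib


/-- A clause over fact variables `χ` and answer variables `Fin N` in which
answer variables occur only negatively: positive `x`-literals, negative
`x`-literals, and negative `p`-literals. -/
def clauseEval {χ : Type*} {N : ℕ} (C : Finset χ × Finset χ × Finset (Fin N))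
    (x : χ → Bool) (p : Fin N → Bool) : Prop :=
  (∃ v ∈ C.1, x v = true) ∨ (∃ v ∈ C.2.1, x v = false) ∨ (∃ l ∈ C.2.2, p l = false)

/-- Lemma 1: let `H` be the hard clauses `φ` of the MaxSAT reduction (answer
variables occur only negatively) and suppose the all-x-true, all-p-false
assignment satisfies them. At any iteration, with `removed` the set of answer
indices eliminated so far, the current instance `ψ_i` keeps the clauses of `H`
having no `¬p_l` literal with `l ∈ removed` and adds hard unit clauses
`(¬p_l)` for `l ∈ removed`. Every optimal solution of `ψ_i` (satisfying its
hard clauses and maximizing the number of true surviving `p`-variables)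
satisfies all clauses of the original formula `φ`. -/
theorem stmt_12 {χ : Type*} [DecidableEq χ] (N : ℕ)
    (H : Finset (Finset χ × Finset χ × Finset (Fin N)))
    (hinit : ∀ C ∈ H, clauseEval C (fun _ => true) (fun _ => false))
    (removed : Finset (Fin N)) (x : χ → Bool) (p : Fin N → Bool)
    (hhard : ∀ C ∈ H, (∀ l ∈ C.2.2, l ∉ removed) → clauseEval C x p)
    (hforced : ∀ l ∈ removed, p l = false)
    (hopt : ∀ (x' : χ → Bool) (p' : Fin N → Bool),
      (∀ C ∈ H, (∀ l ∈ C.2.2, l ∉ removed) → clauseEval C x' p') →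
      (∀ l ∈ removed, p' l = false) →
      (Finset.univ.filter fun l => p' l = true).card ≤
        (Finset.univ.filter fun l => p l = true).card) :
    ∀ C ∈ H, clauseEval C x p := by
  intro C hC
  by_cases h : ∀ l ∈ C.2.2, l ∉ removed
  · exact hhard C hC h
  · push_neg at h
    obtain ⟨l, hl, hlr⟩ := h
    exact Or.inr (Or.inr ⟨l, hl, hforced l hlr⟩)
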